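/- arXiv:1610.09408 — 2 statements merged into one kernel-verified Lean document; each statement's English description precedes it below -/
import Mathlib

section
/- For every i ∈ ℤ the dual adapted basis satisfies the finite-band multiplicative relation Ψ⁻_i = γ • (x · Σ_j Q⁻_{ij} Ψ⁻_j), where the sum is over the finitely many j with Q⁻_{ij} ≠ 0 (all such j satisfy i−1 ≤ j ≤ i−1+LM). (This is the componentwise form of the infinite system (γx)⁻¹ Ψ⃗⁻ = Q⁻ Ψ⃗⁻ with constant finite-band matrix Q⁻.) -/
open Polynomial

/-- The Euler operator `D = x d/dx` on formal Laurent series: `(D f)_n = n • f_n`. -/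
noncomputable def eulerD (R : Type*) [CommRing R] : Module.End R (LaurentSeries R) where
  toFun f :=
    { coeff := fun n => n • f.coeff n
      isPWO_support' := f.isPWO_support'.mono (fun n hn => by
        simp only [Function.mem_support, ne_eq] at hn ⊢
        exact fun h => hn (by rw [h, smul_zero])) }
  map_add' f g := by
    ext n
    simp [smul_add]
  map_smul' r f := by
    ext n
    simp only [HahnSeries.coeff_smul, RingHom.id_apply, zsmul_eq_mul, smul_eq_mul]
    ring

/-- Multiplication by a fixed Laurent series `u`, as an `R`-linear endomorphism. -/
noncomputable def mulOp (R : Type*) [CommRing R] (u : LaurentSeries R) :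
    Module.End R (LaurentSeries R) where
  toFun f := u * f
  map_add' f g := mul_add u f g
  map_smul' r f := by
    simp only [RingHom.id_apply]
    rw [← HahnSeries.C_mul_eq_smul, ← HahnSeries.C_mul_eq_smul, mul_left_comm]

/-- Multiplication by `x` on formal Laurent series. -/
noncomputable def mulX (R : Type*) [CommRing R] : Module.End R (LaurentSeries R) :=
  mulOp R (HahnSeries.single (1 : ℤ) (1 : R))

/-- The recursion operator `R₊ = γ x G(β D)`. -/
noncomputable def Rplus (R : Type*) [CommRing R] (β γ : R) (G : R[X]) :
    Module.End R (LaurentSeries R) :=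
  γ • (mulX R ∘ₗ Polynomial.aeval (β • eulerD R) G)

/-- The recursion operator `R₋ = γ x G(−β D)`. -/
noncomputable def Rminus (R : Type*) [CommRing R] (β γ : R) (G : R[X]) :
    Module.End R (LaurentSeries R) :=
  γ • (mulX R ∘ₗ Polynomial.aeval ((-β) • eulerD R) G)


/-- The polynomial `S(r) = Σ_{k=1}^L k s_k r^k`, as a (Laurent) series in `r`. -/
noncomputable def Spoly (R : Type*) [CommRing R] (L : ℕ) (s : ℕ → R) : LaurentSeries R :=
  ∑ k ∈ Finset.Icc 1 L, ((k : R) * s k) • HahnSeries.single (k : ℤ) (1 : R)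

/-- The operator `V₋ = G(Δ₋)` with `Δ₋ = S(r) − β D_r`. -/
noncomputable def Vminus (R : Type*) [CommRing R] (β : R) (G : Polynomial R) (L : ℕ)
    (s : ℕ → R) : Module.End R (LaurentSeries R) :=
  Polynomial.aeval (mulOp R (Spoly R L s) - β • eulerD R) G

/-- The matrix entry `Q⁻_{ij}`: the coefficient of `r^j` in `V₋(r^{i−1})`. -/
noncomputable def Qminus (R : Type*) [CommRing R] (β : R) (G : Polynomial R) (L : ℕ)
    (s : ℕ → R) (i j : ℤ) : R :=
  (Vminus R β G L s (HahnSeries.single (i - 1) (1 : R))).coeff j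

section AuxMS

variable {R : Type*} [CommRing R]

lemma MS.coeff_finsetSum {ι : Type*} (T : Finset ι) (f : ι → LaurentSeries R) (n : ℤ) :
    (∑ j ∈ T, f j).coeff n = ∑ j ∈ T, (f j).coeff n :=
  map_sum (HahnSeries.coeff.addMonoidHom n) f T

lemma MS.smul_mul (r : R) (x y : LaurentSeries R) : (r • x) * y = r • (x * y) := by
  rw [← HahnSeries.C_mul_eq_smul, ← HahnSeries.C_mul_eq_smul, mul_assoc]

lemma MS.eulerD_coeff (f : LaurentSeries R) (n : ℤ) :
    (eulerD R f).coeff n = n • f.coeff n := rfl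

lemma MS.mulOp_apply (u f : LaurentSeries R) : mulOp R u f = u * f := rfl

lemma MS.eq_sum_single (P : LaurentSeries R) (T : Finset ℤ)
    (hT : ∀ n, P.coeff n ≠ 0 → n ∈ T) :
    P = ∑ j ∈ T, HahnSeries.single j (P.coeff j) := by
  ext n
  rw [MS.coeff_finsetSum]
  by_cases hn : n ∈ T
  · rw [Finset.sum_eq_single_of_mem n hn
      (fun j _ hj => by simp [HahnSeries.coeff_single, Ne.symm hj])]
    simp
  · have h0 : P.coeff n = 0 := by
      by_contra h; exact hn (hT n h)
    rw [h0]
    symm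
    exact Finset.sum_eq_zero fun j hj => by
      have hne : n ≠ j := fun e => hn (e ▸ hj)
      simp [HahnSeries.coeff_single, hne]

lemma MS.mul_coeff_of_subset (P Q : LaurentSeries R) (T : Finset ℤ)
    (hT : ∀ n, P.coeff n ≠ 0 → n ∈ T) (m : ℤ) :
    (P * Q).coeff m = ∑ j ∈ T, P.coeff j * Q.coeff (m - j) := by
  conv_lhs => rw [MS.eq_sum_single P T hT]
  rw [Finset.sum_mul, MS.coeff_finsetSum]
  refine Finset.sum_congr rfl fun j _ => ?_
  have := HahnSeries.coeff_single_mul_add (r := P.coeff j) (x := Q) (a := m - j) (b := j)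
  rwa [sub_add_cancel] at this

lemma MS.Spoly_mul_coeff (L : ℕ) (s : ℕ → R) (P : LaurentSeries R) (n : ℤ) :
    (Spoly R L s * P).coeff n
      = ∑ k ∈ Finset.Icc 1 L, (k : R) * s k * P.coeff (n - (k : ℤ)) := by
  unfold Spoly
  rw [Finset.sum_mul, MS.coeff_finsetSum]
  refine Finset.sum_congr rfl fun k _ => ?_
  rw [MS.smul_mul, HahnSeries.coeff_smul, smul_eq_mul]
  congr 1
  have := HahnSeries.coeff_single_mul_add (r := (1 : R)) (x := P)
    (a := n - (k : ℤ)) (b := (k : ℤ))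
  rw [sub_add_cancel] at this
  rw [this, one_mul]

lemma MS.delta_coeff (β : R) (L : ℕ) (s : ℕ → R) (P : LaurentSeries R) (n : ℤ) :
    ((mulOp R (Spoly R L s) - β • eulerD R) P).coeff n
      = (∑ k ∈ Finset.Icc 1 L, (k : R) * s k * P.coeff (n - (k : ℤ)))
        - β * ((n : R) * P.coeff n) := by
  rw [LinearMap.sub_apply, HahnSeries.coeff_sub, LinearMap.smul_apply,
    HahnSeries.coeff_smul, MS.mulOp_apply, MS.Spoly_mul_coeff, MS.eulerD_coeff,
    smul_eq_mul, zsmul_eq_mul]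

lemma MS.delta_support (β : R) (L : ℕ) (s : ℕ → R) (P : LaurentSeries R) (a b : ℤ)
    (hP : ∀ n, P.coeff n ≠ 0 → n ∈ Finset.Icc a b) :
    ∀ n, ((mulOp R (Spoly R L s) - β • eulerD R) P).coeff n ≠ 0 →
      n ∈ Finset.Icc a (b + (L : ℤ)) := by
  intro n hn
  rw [MS.delta_coeff] at hn
  by_cases hs : (∑ k ∈ Finset.Icc 1 L, (k : R) * s k * P.coeff (n - (k : ℤ))) = 0
  · have hb : β * ((n : R) * P.coeff n) ≠ 0 := by
      intro h; exact hn (by rw [hs, h, sub_zero])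
    have hPn : P.coeff n ≠ 0 := fun h => hb (by rw [h, mul_zero, mul_zero])
    have := Finset.mem_Icc.mp (hP n hPn)
    exact Finset.mem_Icc.mpr ⟨this.1, by omega⟩
  · obtain ⟨k, hk, hterm⟩ := Finset.exists_ne_zero_of_sum_ne_zero hs
    have hPk : P.coeff (n - (k : ℤ)) ≠ 0 := fun h => hterm (by rw [h, mul_zero])
    have h1 := Finset.mem_Icc.mp (hP _ hPk)
    have h2 := Finset.mem_Icc.mp hk
    rw [Finset.mem_Icc]
    omega

lemma MS.delta_pow_support (β : R) (L : ℕ) (s : ℕ → R) (P : LaurentSeries R) (a b : ℤ)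
    (hP : ∀ n, P.coeff n ≠ 0 → n ∈ Finset.Icc a b) (m : ℕ) :
    ∀ n, (((mulOp R (Spoly R L s) - β • eulerD R) ^ m) P).coeff n ≠ 0 →
      n ∈ Finset.Icc a (b + (m : ℤ) * (L : ℤ)) := by
  induction m with
  | zero => simpa using hP
  | succ m ih =>
    intro n hn
    rw [pow_succ'] at hn
    rw [Module.End.mul_apply] at hn
    have := MS.delta_support β L s _ a (b + (m : ℤ) * (L : ℤ)) ih n hn
    rw [Finset.mem_Icc] at this ⊢
    push_cast
    push_cast at this
    constructor <;> [exact this.1; nlinarith [this.2]]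

lemma MS.Qminus_support (β : R) (G : Polynomial R) (L : ℕ) (s : ℕ → R) (i j : ℤ)
    (h : Qminus R β G L s i j ≠ 0) :
    j ∈ Finset.Icc (i - 1) (i - 1 + (L : ℤ) * (G.natDegree : ℤ)) := by
  unfold Qminus Vminus at h
  rw [Polynomial.aeval_eq_sum_range, LinearMap.sum_apply, MS.coeff_finsetSum] at h
  obtain ⟨m, hm, hterm⟩ := Finset.exists_ne_zero_of_sum_ne_zero h
  rw [LinearMap.smul_apply, HahnSeries.coeff_smul, smul_eq_mul] at hterm
  have hcoeff : (((mulOp R (Spoly R L s) - β • eulerD R) ^ m)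
      (HahnSeries.single (i - 1) (1 : R))).coeff j ≠ 0 :=
    fun hc => hterm (by rw [hc, mul_zero])
  have hbase : ∀ n, (HahnSeries.single (i - 1) (1 : R)).coeff n ≠ 0 →
      n ∈ Finset.Icc (i - 1) (i - 1) := by
    intro n hn
    rw [HahnSeries.coeff_single] at hn
    by_cases hni : n = i - 1
    · simp [hni]
    · exact absurd (if_neg hni) hn
  have := MS.delta_pow_support β L s _ (i - 1) (i - 1) hbase m j hcoeff
  rw [Finset.mem_Icc] at this ⊢
  rw [Finset.mem_range] at hm
  have hmM : (m : ℤ) ≤ (G.natDegree : ℤ) := by omega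
  constructor
  · exact this.1
  · nlinarith [this.2, Int.ofNat_nonneg L]

noncomputable def MS.Hb (hbar : ℤ → R) (hneg : ∀ n : ℤ, n < 0 → hbar n = 0) :
    LaurentSeries R :=
  ⟨hbar, Set.IsWF.isPWO (BddBelow.wellFoundedOn_lt
    ⟨0, fun n hn => le_of_not_gt fun h => hn (hneg n h)⟩)⟩

lemma MS.Hb_coeff (hbar : ℤ → R) (hneg : ∀ n : ℤ, n < 0 → hbar n = 0) (n : ℤ) :
    (MS.Hb hbar hneg).coeff n = hbar n := rfl

lemma MS.SHb_coeff (β : R) (L : ℕ) (s : ℕ → R) (hbar : ℤ → R)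
    (hneg : ∀ n : ℤ, n < 0 → hbar n = 0) (hbar0 : hbar 0 = 1)
    (hbarrec : ∀ n : ℤ, 1 ≤ n →
      β * (n : R) * hbar n = -∑ k ∈ Finset.Icc 1 L, (k : R) * s k * hbar (n - (k : ℤ)))
    (m : ℤ) :
    (Spoly R L s * MS.Hb hbar hneg).coeff m = -(β * (m : R) * hbar m) := by
  rw [MS.Spoly_mul_coeff]
  simp only [MS.Hb_coeff]
  rcases lt_trichotomy m 0 with hm | hm | hm
  · rw [hneg m hm, mul_zero, neg_zero]
    exact Finset.sum_eq_zero fun k hk => by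
      have := (Finset.mem_Icc.mp hk).1
      rw [hneg (m - (k : ℤ)) (by omega), mul_zero]
  · subst hm
    rw [Int.cast_zero, mul_zero, zero_mul, neg_zero]
    exact Finset.sum_eq_zero fun k hk => by
      have := (Finset.mem_Icc.mp hk).1
      rw [hneg (0 - (k : ℤ)) (by omega), mul_zero]
  · rw [← neg_eq_iff_eq_neg, ← hbarrec m hm]

lemma MS.intertwine (β : R) (L : ℕ) (s : ℕ → R) (hbar : ℤ → R)
    (hneg : ∀ n : ℤ, n < 0 → hbar n = 0) (hbar0 : hbar 0 = 1)
    (hbarrec : ∀ n : ℤ, 1 ≤ n →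
      β * (n : R) * hbar n = -∑ k ∈ Finset.Icc 1 L, (k : R) * s k * hbar (n - (k : ℤ)))
    (P : LaurentSeries R) (T : Finset ℤ) (hT : ∀ n, P.coeff n ≠ 0 → n ∈ T) (m : ℤ) :
    (((mulOp R (Spoly R L s) - β • eulerD R) P) * MS.Hb hbar hneg).coeff m
      = (-(β * (m : R))) * ((P * MS.Hb hbar hneg).coeff m) := by
  set Hb := MS.Hb hbar hneg with hHb
  have expand : (mulOp R (Spoly R L s) - β • eulerD R) P
      = Spoly R L s * P - β • (eulerD R P) := by
    rw [LinearMap.sub_apply, LinearMap.smul_apply, MS.mulOp_apply]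
  rw [expand, sub_mul, MS.smul_mul, HahnSeries.coeff_sub, HahnSeries.coeff_smul,
    smul_eq_mul]
  have h1 : (Spoly R L s * P) * Hb = P * (Spoly R L s * Hb) := by ring
  have hDT : ∀ n, (eulerD R P).coeff n ≠ 0 → n ∈ T := by
    intro n hn
    rw [MS.eulerD_coeff] at hn
    exact hT n (fun h => hn (by rw [h, smul_zero]))
  rw [h1, MS.mul_coeff_of_subset P _ T hT, MS.mul_coeff_of_subset (eulerD R P) _ T hDT,
    MS.mul_coeff_of_subset P Hb T hT, Finset.mul_sum, Finset.mul_sum,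
    ← Finset.sum_sub_distrib]
  refine Finset.sum_congr rfl fun j _ => ?_
  have hco : Hb.coeff (m - j) = hbar (m - j) := rfl
  rw [MS.SHb_coeff β L s hbar hneg hbar0 hbarrec, MS.eulerD_coeff, zsmul_eq_mul, hco]
  push_cast
  ring

lemma MS.intertwine_pow (β : R) (L : ℕ) (s : ℕ → R) (hbar : ℤ → R)
    (hneg : ∀ n : ℤ, n < 0 → hbar n = 0) (hbar0 : hbar 0 = 1)
    (hbarrec : ∀ n : ℤ, 1 ≤ n →
      β * (n : R) * hbar n = -∑ k ∈ Finset.Icc 1 L, (k : R) * s k * hbar (n - (k : ℤ)))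
    (P : LaurentSeries R) (a b : ℤ)
    (hP : ∀ n, P.coeff n ≠ 0 → n ∈ Finset.Icc a b) (k : ℕ) (m : ℤ) :
    ((((mulOp R (Spoly R L s) - β • eulerD R) ^ k) P) * MS.Hb hbar hneg).coeff m
      = (-(β * (m : R))) ^ k * ((P * MS.Hb hbar hneg).coeff m) := by
  induction k with
  | zero => simp
  | succ k ih =>
    rw [pow_succ', Module.End.mul_apply,
      MS.intertwine β L s hbar hneg hbar0 hbarrec _ (Finset.Icc a (b + (k : ℤ) * (L : ℤ)))
        (MS.delta_pow_support β L s P a b hP k) m, ih]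
    ring

lemma MS.Vminus_mul_Hb_coeff (β : R) (G : Polynomial R) (L : ℕ) (s : ℕ → R)
    (hbar : ℤ → R)
    (hneg : ∀ n : ℤ, n < 0 → hbar n = 0) (hbar0 : hbar 0 = 1)
    (hbarrec : ∀ n : ℤ, 1 ≤ n →
      β * (n : R) * hbar n = -∑ k ∈ Finset.Icc 1 L, (k : R) * s k * hbar (n - (k : ℤ)))
    (P : LaurentSeries R) (a b : ℤ)
    (hP : ∀ n, P.coeff n ≠ 0 → n ∈ Finset.Icc a b) (m : ℤ) :
    ((Vminus R β G L s P) * MS.Hb hbar hneg).coeff m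
      = G.eval (-(β * (m : R))) * ((P * MS.Hb hbar hneg).coeff m) := by
  unfold Vminus
  rw [Polynomial.aeval_eq_sum_range, LinearMap.sum_apply, Finset.sum_mul,
    MS.coeff_finsetSum, Polynomial.eval_eq_sum_range, Finset.sum_mul]
  refine Finset.sum_congr rfl fun k _ => ?_
  rw [LinearMap.smul_apply, MS.smul_mul, HahnSeries.coeff_smul, smul_eq_mul,
    MS.intertwine_pow β L s hbar hneg hbar0 hbarrec P a b hP k m]
  ring

lemma MS.single_support (c : R) (a : ℤ) :
    ∀ n, (HahnSeries.single a c).coeff n ≠ 0 → n ∈ Finset.Icc a a := by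
  intro n hn
  rw [HahnSeries.coeff_single] at hn
  by_cases hna : n = a
  · simp [hna]
  · exact absurd (if_neg hna) hn

end AuxMS

/-- the finite-band multiplicative relation
`Ψ⁻_i = γ • (x · Σ_j Q⁻_{ij} Ψ⁻_j)`, with `Q⁻_{ij} ≠ 0` only for
`i−1 ≤ j ≤ i−1+LM` (componentwise form of `(γx)⁻¹ Ψ⃗⁻ = Q⁻ Ψ⃗⁻`). -/
theorem adapted_basis_minus_multiplicative_system (R : Type*) [CommRing R] (β γ : R)
    (G : Polynomial R) (hG : G.coeff 0 = 1)
    (ρ : ℤ → Rˣ) (hρ0 : ρ 0 = 1)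
    (hρ : ∀ n : ℤ, (ρ n : R) = γ * G.eval ((n : R) * β) * (ρ (n - 1) : R))
    (L : ℕ) (hL : 1 ≤ L) (s : ℕ → R)
    (hbar : ℤ → R) (hbar0 : hbar 0 = 1) (hbarneg : ∀ n : ℤ, n < 0 → hbar n = 0)
    (hbarrec : ∀ n : ℤ, 1 ≤ n →
      β * (n : R) * hbar n = -∑ k ∈ Finset.Icc 1 L, (k : R) * s k * hbar (n - (k : ℤ)))
    (Ψm : ℤ → LaurentSeries R)
    (hΨ : ∀ k n : ℤ, (Ψm k).coeff n = ((ρ (-n))⁻¹ : Rˣ) * hbar (n - k)) :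
    ∀ i : ℤ,
      (∀ j : ℤ, Qminus R β G L s i j ≠ 0 →
        i - 1 ≤ j ∧ j ≤ i - 1 + (L : ℤ) * (G.natDegree : ℤ)) ∧
      Ψm i = γ • (HahnSeries.single (1 : ℤ) (1 : R) *
        ∑ j ∈ Finset.Icc (i - 1) (i - 1 + (L : ℤ) * (G.natDegree : ℤ)),
          Qminus R β G L s i j • Ψm j) := by
  intro i
  constructor
  · intro j hj
    exact Finset.mem_Icc.mp (MS.Qminus_support β G L s i j hj)
  ext n
  set Hb := MS.Hb hbar hbarneg with hHbdef
  -- left side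
  rw [hΨ i n, HahnSeries.coeff_smul, smul_eq_mul]
  -- single * Y coefficient
  have hsingle : ∀ Y : LaurentSeries R,
      (HahnSeries.single (1 : ℤ) (1 : R) * Y).coeff n = Y.coeff (n - 1) := by
    intro Y
    have := HahnSeries.coeff_single_mul_add (r := (1 : R)) (x := Y) (a := n - 1) (b := (1 : ℤ))
    rw [sub_add_cancel] at this
    rw [this, one_mul]
  rw [hsingle, MS.coeff_finsetSum]
  have hterm : ∀ j ∈ Finset.Icc (i - 1) (i - 1 + (L : ℤ) * (G.natDegree : ℤ)),
      (Qminus R β G L s i j • Ψm j).coeff (n - 1)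
        = Qminus R β G L s i j * (((ρ (1 - n))⁻¹ : Rˣ) * hbar (n - 1 - j)) := by
    intro j _
    rw [HahnSeries.coeff_smul, smul_eq_mul, hΨ j (n - 1), neg_sub]
  rw [Finset.sum_congr rfl hterm]
  have hfactor : ∑ j ∈ Finset.Icc (i - 1) (i - 1 + (L : ℤ) * (G.natDegree : ℤ)),
      Qminus R β G L s i j * (((ρ (1 - n))⁻¹ : Rˣ) * hbar (n - 1 - j))
      = (((ρ (1 - n))⁻¹ : Rˣ) : R) * ∑ j ∈ Finset.Icc (i - 1) (i - 1 + (L : ℤ) * (G.natDegree : ℤ)),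
          Qminus R β G L s i j * hbar (n - 1 - j) := by
    rw [Finset.mul_sum]
    exact Finset.sum_congr rfl fun j _ => by ring
  rw [hfactor]
  -- the key sum identity
  have hVsupp : ∀ t, (Vminus R β G L s (HahnSeries.single (i - 1) (1 : R))).coeff t ≠ 0 →
      t ∈ Finset.Icc (i - 1) (i - 1 + (L : ℤ) * (G.natDegree : ℤ)) :=
    fun t ht => MS.Qminus_support β G L s i t ht
  have h3 := MS.mul_coeff_of_subset
    (Vminus R β G L s (HahnSeries.single (i - 1) (1 : R))) Hb
    (Finset.Icc (i - 1) (i - 1 + (L : ℤ) * (G.natDegree : ℤ))) hVsupp (n - 1)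
  rw [MS.Vminus_mul_Hb_coeff β G L s hbar hbarneg hbar0 hbarrec _ (i - 1) (i - 1)
    (MS.single_support (1 : R) (i - 1)) (n - 1)] at h3
  have h4 : (HahnSeries.single (i - 1) (1 : R) * Hb).coeff (n - 1) = hbar (n - i) := by
    have h5 := HahnSeries.coeff_single_mul_add (r := (1 : R)) (x := Hb)
      (a := n - i) (b := i - 1)
    have he : n - i + (i - 1) = n - 1 := by ring
    rw [he] at h5
    rw [h5, one_mul]
    rfl
  rw [h4] at h3
  have hHbc : ∀ t : ℤ, Hb.coeff t = hbar t := fun t => rfl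
  have hsum : ∑ j ∈ Finset.Icc (i - 1) (i - 1 + (L : ℤ) * (G.natDegree : ℤ)),
      Qminus R β G L s i j * hbar (n - 1 - j)
      = G.eval (-(β * ((n - 1 : ℤ) : R))) * hbar (n - i) := by
    calc ∑ j ∈ Finset.Icc (i - 1) (i - 1 + (L : ℤ) * (G.natDegree : ℤ)),
        Qminus R β G L s i j * hbar (n - 1 - j)
        = ∑ j ∈ Finset.Icc (i - 1) (i - 1 + (L : ℤ) * (G.natDegree : ℤ)),
            (Vminus R β G L s (HahnSeries.single (i - 1) (1 : R))).coeff j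
              * Hb.coeff (n - 1 - j) := Finset.sum_congr rfl fun j _ => rfl
      _ = G.eval (-(β * ((n - 1 : ℤ) : R))) * hbar (n - i) := h3.symm
  rw [hsum]
  -- units algebra
  have harg : (-(β * ((n - 1 : ℤ) : R))) = ((1 - n : ℤ) : R) * β := by push_cast; ring
  have hρ1 : ((ρ (1 - n) : Rˣ) : R)
      = γ * G.eval (((1 - n : ℤ) : R) * β) * ((ρ (-n) : Rˣ) : R) := by
    have := hρ (1 - n)
    rwa [show (1 - n - 1 : ℤ) = -n by ring] at this
  have hinv : (((ρ (-n))⁻¹ : Rˣ) : R)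
      = γ * G.eval (((1 - n : ℤ) : R) * β) * (((ρ (1 - n))⁻¹ : Rˣ) : R) := by
    calc (((ρ (-n))⁻¹ : Rˣ) : R)
        = ((ρ (1 - n) : Rˣ) : R) * (((ρ (1 - n))⁻¹ : Rˣ) : R) * (((ρ (-n))⁻¹ : Rˣ) : R) := by
          rw [Units.mul_inv, one_mul]
      _ = γ * G.eval (((1 - n : ℤ) : R) * β) * (((ρ (1 - n))⁻¹ : Rˣ) : R)
            * (((ρ (-n) : Rˣ) : R) * (((ρ (-n))⁻¹ : Rˣ) : R)) := by rw [hρ1]; ring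
      _ = γ * G.eval (((1 - n : ℤ) : R) * β) * (((ρ (1 - n))⁻¹ : Rˣ) : R) := by
          rw [Units.mul_inv, mul_one]
  rw [harg, hinv]
  ring
end

section
/- The recursion operator R₊ is the conjugate of multiplication by x by the diagonal operator determined by the content-product coefficients: R₊ = C ∘ M_x ∘ C⁻¹ as R-linear endomorphisms of formal Laurent series, where C is the invertible diagonal operator (C f)_n = ρ_{n−1} • f_n and M_x is multiplication by x. (This is the concrete form of the identity R₊ = e^{T(D−1)} ∘ x ∘ e^{−T(D−1)}, where e^{T_j} = ρ_j.) -/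
open Polynomial

/-- The diagonal operator `(C f)_n = d n • f_n` on formal Laurent series. -/
noncomputable def diagOp (R : Type*) [CommRing R] (d : ℤ → R) :
    Module.End R (LaurentSeries R) where
  toFun f :=
    { coeff := fun n => d n * f.coeff n
      isPWO_support' := f.isPWO_support'.mono (fun n hn => by
        simp only [Function.mem_support, ne_eq] at hn ⊢
        exact fun h => hn (by rw [h, mul_zero])) }
  map_add' f g := by
    ext n
    simp [mul_add]
  map_smul' r f := by
    ext n
    simp only [HahnSeries.coeff_smul, RingHom.id_apply, smul_eq_mul]
    ring

section Aux
variable {R : Type*} [CommRing R]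

lemma diagOp_coeff (d : ℤ → R) (f : LaurentSeries R) (n : ℤ) :
    (diagOp R d f).coeff n = d n * f.coeff n := rfl

lemma mulX_coeff (f : LaurentSeries R) (n : ℤ) :
    (mulX R f).coeff n = f.coeff (n - 1) := by
  have : (mulX R f).coeff ((n - 1) + 1) = f.coeff (n - 1) := by
    show (HahnSeries.single (1:ℤ) (1:R) * f).coeff _ = _
    rw [HahnSeries.coeff_single_mul_add, one_mul]
  rwa [show (n - 1) + 1 = n by ring] at this

lemma pow_smul_eulerD_coeff (β : R) (k : ℕ) (f : LaurentSeries R) (n : ℤ) :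
    (((β • eulerD R) ^ k) f).coeff n = ((n : R) * β) ^ k * f.coeff n := by
  induction k with
  | zero => simp
  | succ k ih =>
    rw [pow_succ', Module.End.mul_apply]
    have : ((β • eulerD R) (((β • eulerD R) ^ k) f)).coeff n
        = (n : R) * β * ((((β • eulerD R) ^ k) f).coeff n) := by
      show β * (n • _) = _
      rw [zsmul_eq_mul]; ring
    rw [this, ih, pow_succ]; ring

lemma aeval_eulerD_coeff (β : R) (G : Polynomial R) (f : LaurentSeries R) (n : ℤ) :
    ((Polynomial.aeval (β • eulerD R) G) f).coeff n = G.eval ((n : R) * β) * f.coeff n := by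
  induction G using Polynomial.induction_on' with
  | add p q hp hq => simp [map_add, LinearMap.add_apply, hp, hq, add_mul]
  | monomial k a =>
    rw [Polynomial.aeval_monomial, Polynomial.eval_monomial, Module.End.mul_apply,
      Module.algebraMap_end_apply, HahnSeries.coeff_smul, pow_smul_eulerD_coeff,
      smul_eq_mul, mul_assoc]

end Aux

/-- `R₊ = C ∘ M_x ∘ C⁻¹`, where `C` is the invertible diagonal operator
`(C f)_n = ρ_{n−1} • f_n`. -/
theorem Rplus_conjugation (R : Type*) [CommRing R] (β γ : R) (G : Polynomial R)
    (hG : G.coeff 0 = 1)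
    (ρ : ℤ → Rˣ) (hρ0 : ρ 0 = 1)
    (hρ : ∀ n : ℤ, (ρ n : R) = γ * G.eval ((n : R) * β) * (ρ (n - 1) : R)) :
    diagOp R (fun n => (ρ (n - 1) : R)) ∘ₗ diagOp R (fun n => (((ρ (n - 1))⁻¹ : Rˣ) : R)) =
        LinearMap.id ∧
    diagOp R (fun n => (((ρ (n - 1))⁻¹ : Rˣ) : R)) ∘ₗ diagOp R (fun n => (ρ (n - 1) : R)) =
        LinearMap.id ∧
    Rplus R β γ G =
      diagOp R (fun n => (ρ (n - 1) : R)) ∘ₗ mulX R ∘ₗ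
        diagOp R (fun n => (((ρ (n - 1))⁻¹ : Rˣ) : R)) := by
  refine ⟨?_, ?_, ?_⟩
  · ext f n
    simp only [LinearMap.comp_apply, diagOp_coeff, LinearMap.id_apply, ← mul_assoc,
      Units.mul_inv, one_mul]
  · ext f n
    simp only [LinearMap.comp_apply, diagOp_coeff, LinearMap.id_apply, ← mul_assoc,
      Units.inv_mul, one_mul]
  · ext f n
    simp only [Rplus, LinearMap.smul_apply, LinearMap.comp_apply, HahnSeries.coeff_smul,
      diagOp_coeff, mulX_coeff, aeval_eulerD_coeff, smul_eq_mul]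
    have h := hρ (n - 1)
    push_cast at h
    rw [show n - 1 - 1 = n - 2 by ring] at h ⊢
    rw [h]
    push_cast
    rw [mul_assoc (γ * Polynomial.eval (((n : R) - 1) * β) G),
      ← mul_assoc ((ρ (n - 2) : R)), Units.mul_inv, one_mul]
    ring
end
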